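/- Let a < b be real numbers, let u : ℝ × ℝ → ℂ be continuously differentiable on [a,b] × [0,1], and let V : ℝ × ℝ → ℂ be continuous, such that ∂u/∂s (s,t) = i · (V(s,t) − ∂u/∂t (s,t)) for all (s,t) ∈ [a,b] × [0,1]. Assume u(s,0) = u(s,1) for all s ∈ [a,b] (the cylinder case), and assume Re u(s,t) > 1/10 and Im V(s,t) < 0 for all (s,t) ∈ [a,b] × [0,1]. Then ∫₀¹ Re u(a,t) dt < ∫₀¹ Re u(b,t) dt. -/

import Mathlib

open MeasureTheory

/-- weak Morse approximation, `x`-direction, cylinder case. For a `C¹`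
solution `u` of the perturbed Cauchy–Riemann equation `∂ₛu = i·(V − ∂ₜu)` on
`[a,b] × [0,1]` with `u(s,0) = u(s,1)`, if `Re u > 1/10` and `Im V < 0` throughout, then
`∫₀¹ Re u(a,t) dt < ∫₀¹ Re u(b,t) dt`. -/
theorem stmt_5 (a b : ℝ) (hab : a < b) (u V : ℝ × ℝ → ℂ)
    (hu : ContDiffOn ℝ 1 u (Set.Icc a b ×ˢ Set.Icc (0:ℝ) 1))
    (hV : ContinuousOn V (Set.Icc a b ×ˢ Set.Icc (0:ℝ) 1))
    (hpde : ∀ p ∈ Set.Icc a b ×ˢ Set.Icc (0:ℝ) 1,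
      fderivWithin ℝ u (Set.Icc a b ×ˢ Set.Icc (0:ℝ) 1) p ((1:ℝ), (0:ℝ)) =
        Complex.I * (V p - fderivWithin ℝ u (Set.Icc a b ×ˢ Set.Icc (0:ℝ) 1) p ((0:ℝ), (1:ℝ))))
    (hper : ∀ s ∈ Set.Icc a b, u (s, 0) = u (s, 1))
    (hre : ∀ p ∈ Set.Icc a b ×ˢ Set.Icc (0:ℝ) 1, (1:ℝ)/10 < (u p).re)
    (hVim : ∀ p ∈ Set.Icc a b ×ˢ Set.Icc (0:ℝ) 1, (V p).im < 0) :
    ∫ t in (0:ℝ)..1, (u (a, t)).re < ∫ t in (0:ℝ)..1, (u (b, t)).re := by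
  set Ω : Set (ℝ × ℝ) := Set.Icc a b ×ˢ Set.Icc (0:ℝ) 1 with hΩ
  have h01 : (0:ℝ) < 1 := one_pos
  have hΩu : UniqueDiffOn ℝ Ω := (uniqueDiffOn_Icc hab).prod (uniqueDiffOn_Icc h01)
  have hΩm : MeasurableSet Ω := (measurableSet_Icc).prod measurableSet_Icc
  have hΩc : IsCompact Ω := (isCompact_Icc).prod isCompact_Icc
  set D : ℝ × ℝ → (ℝ × ℝ →L[ℝ] ℂ) := fderivWithin ℝ u Ω with hD
  have hDc : ContinuousOn D Ω := hu.continuousOn_fderivWithin hΩu le_rfl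
  set g : ℝ × ℝ → ℝ := fun p => (D p ((1:ℝ), (0:ℝ))).re with hg
  set h : ℝ × ℝ → ℝ := fun p => (D p ((0:ℝ), (1:ℝ))).im with hh
  have hgc : ContinuousOn g Ω := by
    apply Complex.continuous_re.comp_continuousOn
    exact (ContinuousLinearMap.apply ℝ ℂ ((1:ℝ),(0:ℝ))).continuous.comp_continuousOn hDc
  have hhc : ContinuousOn h Ω := by
    apply Complex.continuous_im.comp_continuousOn
    exact (ContinuousLinearMap.apply ℝ ℂ ((0:ℝ),(1:ℝ))).continuous.comp_continuousOn hDc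
  have huc : ContinuousOn u Ω := hu.continuousOn
  -- derivative in the s-direction
  have hds : ∀ t ∈ Set.Icc (0:ℝ) 1, ∀ s ∈ Set.Icc a b,
      HasDerivWithinAt (fun s => u (s, t)) (D (s, t) ((1:ℝ),(0:ℝ))) (Set.Icc a b) s := by
    intro t ht s hs
    have hst : (s, t) ∈ Ω := ⟨hs, ht⟩
    have h1 : HasFDerivWithinAt u (D (s, t)) Ω (s, t) :=
      (hu.differentiableOn one_ne_zero (s, t) hst).hasFDerivWithinAt
    have h2 : HasDerivWithinAt (fun s : ℝ => ((s, t) : ℝ × ℝ)) ((1:ℝ),(0:ℝ)) (Set.Icc a b) s :=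
      (HasDerivAt.prodMk (hasDerivAt_id s) (hasDerivAt_const s t)).hasDerivWithinAt
    exact h1.comp_hasDerivWithinAt s h2 (fun x hx => show (x, t) ∈ Ω from ⟨hx, ht⟩)
  -- derivative in the t-direction
  have hdt : ∀ s ∈ Set.Icc a b, ∀ t ∈ Set.Icc (0:ℝ) 1,
      HasDerivWithinAt (fun t => u (s, t)) (D (s, t) ((0:ℝ),(1:ℝ))) (Set.Icc (0:ℝ) 1) t := by
    intro s hs t ht
    have hst : (s, t) ∈ Ω := ⟨hs, ht⟩
    have h1 : HasFDerivWithinAt u (D (s, t)) Ω (s, t) :=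
      (hu.differentiableOn one_ne_zero (s, t) hst).hasFDerivWithinAt
    have h2 : HasDerivWithinAt (fun t : ℝ => ((s, t) : ℝ × ℝ)) ((0:ℝ),(1:ℝ)) (Set.Icc (0:ℝ) 1) t :=
      (HasDerivAt.prodMk (hasDerivAt_const t s) (hasDerivAt_id t)).hasDerivWithinAt
    exact h1.comp_hasDerivWithinAt t h2 (fun x hx => ⟨hs, hx⟩)
  -- FTC in the s-direction for Re u
  have ftcA : ∀ t ∈ Set.Icc (0:ℝ) 1,
      ∫ s in a..b, g (s, t) = (u (b, t)).re - (u (a, t)).re := by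
    intro t ht
    apply intervalIntegral.integral_eq_sub_of_hasDeriv_right_of_le (f := fun s => (u (s, t)).re) hab.le
    · exact Complex.continuous_re.comp_continuousOn
        (huc.comp (Continuous.continuousOn (by fun_prop)) (fun x hx => ⟨hx, ht⟩))
    · intro s hs
      have := ((hds t ht s (Set.Ioo_subset_Icc_self hs)).mono
        Set.Ioo_subset_Icc_self).hasDerivAt (Ioo_mem_nhds hs.1 hs.2)
      exact ((Complex.reCLM.hasFDerivAt.comp_hasDerivWithinAt s
        this.hasDerivWithinAt) : HasDerivWithinAt _ _ _ s)
    · apply ContinuousOn.intervalIntegrable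
      rw [Set.uIcc_of_le hab.le]
      exact hgc.comp (Continuous.continuousOn (by fun_prop)) (fun x hx => ⟨hx, ht⟩)
  -- FTC in the t-direction for Im u
  have ftcB : ∀ s ∈ Set.Icc a b, ∫ t in (0:ℝ)..1, h (s, t) = 0 := by
    intro s hs
    have : ∫ t in (0:ℝ)..1, h (s, t) = (u (s, 1)).im - (u (s, 0)).im := by
      apply intervalIntegral.integral_eq_sub_of_hasDeriv_right_of_le (f := fun t => (u (s, t)).im) h01.le
      · exact Complex.continuous_im.comp_continuousOn
          (huc.comp (Continuous.continuousOn (by fun_prop)) (fun x hx => ⟨hs, hx⟩))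
      · intro t ht
        have := ((hdt s hs t (Set.Ioo_subset_Icc_self ht)).mono
          Set.Ioo_subset_Icc_self).hasDerivAt (Ioo_mem_nhds ht.1 ht.2)
        exact ((Complex.imCLM.hasFDerivAt.comp_hasDerivWithinAt t
          this.hasDerivWithinAt) : HasDerivWithinAt _ _ _ t)
      · apply ContinuousOn.intervalIntegrable
        rw [Set.uIcc_of_le h01.le]
        exact hhc.comp (Continuous.continuousOn (by fun_prop)) (fun x hx => ⟨hs, hx⟩)
    rw [this, hper s hs]
    ring
  -- integrability on Ω
  have hgint : IntegrableOn g Ω := hgc.integrableOn_compact hΩc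
  have hhint : IntegrableOn h Ω := hhc.integrableOn_compact hΩc
  have hVint : IntegrableOn (fun p => -(V p).im) Ω :=
    ((Complex.continuous_im.comp_continuousOn hV).neg).integrableOn_compact hΩc
  -- the key double-integral identity
  have prodrw : (volume : Measure (ℝ × ℝ)).restrict Ω =
      (volume.restrict (Set.Icc a b)).prod (volume.restrict (Set.Icc (0:ℝ) 1)) := by
    rw [Measure.prod_restrict, ← Measure.volume_eq_prod]
  -- step 1: reduce goal to positivity of the double integral
  have key : (∫ t in (0:ℝ)..1, (u (b, t)).re) - (∫ t in (0:ℝ)..1, (u (a, t)).re)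
      = ∫ p in Ω, g p := by
    have hib : IntervalIntegrable (fun t => (u (b, t)).re) volume 0 1 := by
      apply ContinuousOn.intervalIntegrable
      rw [Set.uIcc_of_le h01.le]
      exact Complex.continuous_re.comp_continuousOn
        (huc.comp (Continuous.continuousOn (by fun_prop))
          (fun x hx => ⟨Set.right_mem_Icc.2 hab.le, hx⟩))
    have hia : IntervalIntegrable (fun t => (u (a, t)).re) volume 0 1 := by
      apply ContinuousOn.intervalIntegrable
      rw [Set.uIcc_of_le h01.le]
      exact Complex.continuous_re.comp_continuousOn
        (huc.comp (Continuous.continuousOn (by fun_prop))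
          (fun x hx => ⟨Set.left_mem_Icc.2 hab.le, hx⟩))
    rw [← intervalIntegral.integral_sub hib hia]
    have e1 : ∫ t in (0:ℝ)..1, ((u (b, t)).re - (u (a, t)).re)
        = ∫ t in (0:ℝ)..1, ∫ s in a..b, g (s, t) := by
      apply intervalIntegral.integral_congr
      intro t ht
      rw [Set.uIcc_of_le h01.le] at ht
      exact (ftcA t ht).symm
    rw [e1]
    have e2 : ∫ t in (0:ℝ)..1, ∫ s in a..b, g (s, t)
        = ∫ t in Set.Icc (0:ℝ) 1, ∫ s in Set.Icc a b, g (s, t) := by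
      rw [intervalIntegral.integral_of_le h01.le,
        ← MeasureTheory.integral_Icc_eq_integral_Ioc]
      apply setIntegral_congr_fun measurableSet_Icc
      intro t _
      show (∫ s in a..b, g (s, t)) = ∫ s in Set.Icc a b, g (s, t)
      rw [intervalIntegral.integral_of_le hab.le,
        ← MeasureTheory.integral_Icc_eq_integral_Ioc]
    rw [e2]
    have hgint' : Integrable g
        ((volume.restrict (Set.Icc a b)).prod (volume.restrict (Set.Icc (0:ℝ) 1))) := by
      rw [← prodrw]; exact hgint
    rw [show (∫ p in Ω, g p) = ∫ p, g p ∂((volume.restrict (Set.Icc a b)).prod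
        (volume.restrict (Set.Icc (0:ℝ) 1))) from by rw [← prodrw]]
    rw [MeasureTheory.integral_prod_symm g hgint']
  rw [← sub_pos, key]
  -- step 2: rewrite g via the PDE
  have grw : ∫ p in Ω, g p = ∫ p in Ω, (-(V p).im + h p) := by
    apply setIntegral_congr_fun hΩm
    intro p hp
    have := hpde p hp
    simp only [hg, hh, this, Complex.mul_re, Complex.I_re, Complex.I_im,
      Complex.sub_re, Complex.sub_im]
    ring
  rw [grw, integral_add hVint hhint]
  -- step 3: the h part vanishes
  have hzero : ∫ p in Ω, h p = 0 := by
    have hhint' : IntegrableOn h (Set.Icc a b ×ˢ Set.Icc (0:ℝ) 1)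
        ((volume : Measure ℝ).prod volume) := by
      rw [← Measure.volume_eq_prod]; exact hhint
    rw [hΩ, show (∫ p in Set.Icc a b ×ˢ Set.Icc (0:ℝ) 1, h p)
        = ∫ p in Set.Icc a b ×ˢ Set.Icc (0:ℝ) 1, h p ∂((volume : Measure ℝ).prod volume)
        from by rw [← Measure.volume_eq_prod],
      MeasureTheory.setIntegral_prod h hhint']
    have : ∀ s ∈ Set.Icc a b, (∫ t in Set.Icc (0:ℝ) 1, h (s, t)) = 0 := by
      intro s hs
      rw [MeasureTheory.integral_Icc_eq_integral_Ioc,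
        ← intervalIntegral.integral_of_le h01.le]
      exact ftcB s hs
    rw [setIntegral_congr_fun measurableSet_Icc this]
    simp
  rw [hzero, add_zero]
  -- step 4: the V part is positive
  obtain ⟨p₀, hp₀, hmin⟩ := hΩc.exists_isMinOn ⟨(a, 0), Set.left_mem_Icc.2 hab.le,
    Set.left_mem_Icc.2 h01.le⟩ ((Complex.continuous_im.comp_continuousOn hV).neg)
  have hε : 0 < -(V p₀).im := by linarith [hVim p₀ hp₀]
  have hvol : (volume Ω).toReal = (b - a) * 1 := by
    rw [hΩ, Measure.volume_eq_prod, Measure.prod_prod, Real.volume_Icc, Real.volume_Icc,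
      ENNReal.toReal_mul, ENNReal.toReal_ofReal (by linarith), ENNReal.toReal_ofReal (by norm_num)]
    norm_num
  have hμΩ : volume Ω ≠ ⊤ := hΩc.measure_ne_top
  have hge := setIntegral_ge_of_const_le_real hΩm hμΩ (fun p hp => hmin hp) hVint
  simp only [Function.comp_apply, Pi.neg_apply, Measure.real] at hge
  have : 0 < -(V p₀).im * (volume Ω).toReal := by
    apply mul_pos hε
    rw [hvol]; linarith
  linarith
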